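/- The head frequency of a serial episode with window-width k exceeding the total time span of the event sequence equals the number of earliest transiting occurrences of the episode, which equals the number of distinct indices at which an occurrence of the episode starts. -/

import Mathlib

variable {A : Type}

/-- An occurrence of the (N+1)-node serial episode `α` in the event sequence
`E` (of length `n`): a strictly increasing index map matching the event-types. -/
def IsOcc (E : ℕ → A) (n : ℕ) {N : ℕ} (α : Fin (N+1) → A) (h : Fin (N+1) → ℕ) : Prop :=
  StrictMono h ∧ (∀ i, h i < n) ∧ (∀ i, E (h i) = α i)

/-- Earliest transiting occurrence: each `h i.succ` is the least index after
`h i.castSucc` carrying event-type `α i.succ`. -/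
def IsET (E : ℕ → A) (n : ℕ) {N : ℕ} (α : Fin (N+1) → A) (h : Fin (N+1) → ℕ) : Prop :=
  IsOcc E n α h ∧ ∀ (i : Fin N) (j : ℕ), h i.castSucc < j → E j = α i.succ → h i.succ ≤ j

/-- Lexicographic order on occurrences. -/
def OccLex {N : ℕ} (h1 h2 : Fin (N+1) → ℕ) : Prop :=
  ∃ i, (∀ k < i, h1 k = h2 k) ∧ h1 i < h2 i

/-- The window `[a, b]` contains an occurrence of `α`. -/
def WindowHasOcc (E : ℕ → A) (n : ℕ) {N : ℕ} (α : Fin (N+1) → A) (a b : ℕ) : Prop :=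
  ∃ h, IsOcc E n α h ∧ a ≤ h 0 ∧ h (Fin.last N) ≤ b

/-- `[a, b]` is a minimal window of `α`: it contains an occurrence and no
proper subwindow contains one. -/
def IsMinWindow (E : ℕ → A) (n : ℕ) {N : ℕ} (α : Fin (N+1) → A) (a b : ℕ) : Prop :=
  WindowHasOcc E n α a b ∧
    ∀ c d, a ≤ c → d ≤ b → (a < c ∨ d < b) → ¬ WindowHasOcc E n α c d

/-- A minimal occurrence: its window is a minimal window. -/
def IsMinOcc (E : ℕ → A) (n : ℕ) {N : ℕ} (α : Fin (N+1) → A) (h : Fin (N+1) → ℕ) : Prop :=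
  IsOcc E n α h ∧ IsMinWindow E n α (h 0) (h (Fin.last N))

/-- `h'` is the earliest transiting occurrence immediately following `h`
in the lexicographic enumeration of earliest transiting occurrences. -/
def NextET (E : ℕ → A) (n : ℕ) {N : ℕ} (α : Fin (N+1) → A) (h h' : Fin (N+1) → ℕ) : Prop :=
  IsET E n α h ∧ IsET E n α h' ∧ OccLex h h' ∧
    ¬ ∃ g, IsET E n α g ∧ OccLex h g ∧ OccLex g h'

/-- `h1 <⋆ h2` are non-interleaved: `h2 (v_j) ≥ h1 (v_{j+1})` for all `j < N`. -/
def NonInterleaved {N : ℕ} (h1 h2 : Fin (N+1) → ℕ) : Prop :=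
  ∀ i : Fin N, h1 i.succ ≤ h2 i.castSucc

/-- Non-overlapped occurrences: one ends strictly before the other begins. -/
def NonOverlapped {N : ℕ} (h1 h2 : Fin (N+1) → ℕ) : Prop :=
  h1 (Fin.last N) < h2 0 ∨ h2 (Fin.last N) < h1 0

/-- Greedy chain starting at `i0`. -/
private noncomputable def chain (E : ℕ → A) {N : ℕ} (α : Fin (N+1) → A) (i0 : ℕ) : ℕ → ℕ
  | 0 => i0
  | m+1 => sInf {j | chain E α i0 m < j ∧
      E j = α ⟨(m+1) % (N+1), Nat.mod_lt _ (Nat.succ_pos N)⟩}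

private lemma chain_le {E : ℕ → A} {n : ℕ} {N : ℕ} {α : Fin (N+1) → A}
    {h : Fin (N+1) → ℕ} (hocc : IsOcc E n α h) :
    ∀ m (hm : m ≤ N), chain E α (h 0) m ≤ h ⟨m, Nat.lt_succ_of_le hm⟩ := by
  intro m
  induction m with
  | zero => intro _; exact le_of_eq rfl
  | succ m ih =>
    intro hm
    have hm' : m ≤ N := Nat.le_of_succ_le hm
    have hmod : (m+1) % (N+1) = m+1 := Nat.mod_eq_of_lt (Nat.lt_succ_of_le hm)
    have hlt : (⟨m, Nat.lt_succ_of_le hm'⟩ : Fin (N+1)) < ⟨m+1, Nat.lt_succ_of_le hm⟩ :=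
      Nat.lt_succ_self m
    have hmem : h ⟨m+1, Nat.lt_succ_of_le hm⟩ ∈
        {j | chain E α (h 0) m < j ∧
          E j = α ⟨(m+1) % (N+1), Nat.mod_lt _ (Nat.succ_pos N)⟩} := by
      constructor
      · exact lt_of_le_of_lt (ih hm') (hocc.1 hlt)
      · have := hocc.2.2 ⟨m+1, Nat.lt_succ_of_le hm⟩
        simpa [hmod] using this
    exact Nat.sInf_le hmem

private lemma chain_mem {E : ℕ → A} {n : ℕ} {N : ℕ} {α : Fin (N+1) → A}
    {h : Fin (N+1) → ℕ} (hocc : IsOcc E n α h) {m : ℕ} (hm : m + 1 ≤ N) :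
    chain E α (h 0) (m+1) ∈ {j | chain E α (h 0) m < j ∧
      E j = α ⟨(m+1) % (N+1), Nat.mod_lt _ (Nat.succ_pos N)⟩} := by
  have hm' : m ≤ N := Nat.le_of_succ_le hm
  have hmod : (m+1) % (N+1) = m+1 := Nat.mod_eq_of_lt (Nat.lt_succ_of_le hm)
  have hlt : (⟨m, Nat.lt_succ_of_le hm'⟩ : Fin (N+1)) < ⟨m+1, Nat.lt_succ_of_le hm⟩ :=
    Nat.lt_succ_self m
  have hne : {j | chain E α (h 0) m < j ∧
      E j = α ⟨(m+1) % (N+1), Nat.mod_lt _ (Nat.succ_pos N)⟩}.Nonempty := by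
    refine ⟨h ⟨m+1, Nat.lt_succ_of_le hm⟩, ?_, ?_⟩
    · exact lt_of_le_of_lt (chain_le hocc m hm') (hocc.1 hlt)
    · have := hocc.2.2 ⟨m+1, Nat.lt_succ_of_le hm⟩
      simpa [hmod] using this
  exact Nat.sInf_mem hne

/-- From any occurrence, an ET occurrence with the same start. -/
private lemma exists_ET {E : ℕ → A} {n : ℕ} {N : ℕ} {α : Fin (N+1) → A}
    {h : Fin (N+1) → ℕ} (hocc : IsOcc E n α h) :
    ∃ g, IsET E n α g ∧ g 0 = h 0 := by
  refine ⟨fun i => chain E α (h 0) i.val, ?_, rfl⟩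
  have hmono : ∀ i : Fin N,
      chain E α (h 0) (i : ℕ) < chain E α (h 0) ((i : ℕ) + 1) := by
    intro i
    exact (chain_mem hocc (Nat.succ_le_of_lt i.isLt)).1
  have hchainval : ∀ i : Fin (N+1),
      chain E α (h 0) i.val ≤ h i := by
    intro i
    have := chain_le hocc i.val (Nat.le_of_lt_succ i.isLt)
    simpa using this
  have hEchain : ∀ i : Fin (N+1), E (chain E α (h 0) i.val) = α i := by
    intro i
    rcases i with ⟨v, hv⟩
    cases v with
    | zero => simpa [chain] using hocc.2.2 0
    | succ m =>
      have hm : m + 1 ≤ N := Nat.le_of_lt_succ hv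
      have := (chain_mem hocc hm).2
      have hmod : (m+1) % (N+1) = m+1 := Nat.mod_eq_of_lt hv
      simpa [hmod] using this
  refine ⟨⟨?_, ?_, hEchain⟩, ?_⟩
  · -- StrictMono
    have : StrictMono fun i : Fin (N+1) => chain E α (h 0) i.val := by
      intro i j hij
      have : ∀ a b : ℕ, a < b → b ≤ N →
          chain E α (h 0) a < chain E α (h 0) b := by
        intro a b hab hb
        induction b with
        | zero => omega
        | succ b ihb =>
          rcases Nat.lt_succ_iff_lt_or_eq.mp hab with hab' | rfl
          · exact lt_trans (ihb hab' (Nat.le_of_succ_le hb))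
              (chain_mem hocc hb).1
          · exact (chain_mem hocc hb).1
      exact this i.val j.val hij (Nat.le_of_lt_succ j.isLt)
    exact this
  · intro i
    exact lt_of_le_of_lt (hchainval i) (hocc.2.1 i)
  · -- ET
    intro i j hlt hje
    have hi : (i : ℕ) + 1 ≤ N := Nat.succ_le_of_lt i.isLt
    have hmod : ((i : ℕ)+1) % (N+1) = (i : ℕ)+1 := Nat.mod_eq_of_lt (Nat.lt_succ_of_le hi)
    have hmem : j ∈ {j | chain E α (h 0) (i : ℕ) < j ∧
        E j = α ⟨((i : ℕ)+1) % (N+1), Nat.mod_lt _ (Nat.succ_pos N)⟩} := by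
      refine ⟨by simpa [Fin.castSucc] using hlt, ?_⟩
      have : (⟨((i : ℕ)+1) % (N+1), Nat.mod_lt _ (Nat.succ_pos N)⟩ : Fin (N+1)) = i.succ := by
        ext; simp [hmod]
      rw [this]; exact hje
    have := Nat.sInf_le hmem
    simpa [chain, Fin.succ] using this

/-- ET occurrences are determined by their starting index. -/
private lemma ET_unique {E : ℕ → A} {n : ℕ} {N : ℕ} {α : Fin (N+1) → A}
    {h g : Fin (N+1) → ℕ} (hh : IsET E n α h) (hg : IsET E n α g)
    (h0 : h 0 = g 0) : h = g := by
  funext i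
  induction i using Fin.induction with
  | zero => exact h0
  | succ i ih =>
    have h1 : h i.succ ≤ g i.succ := by
      apply hh.2 i (g i.succ)
      · rw [ih]; exact hg.1.1 (Fin.castSucc_lt_succ (i := i))
      · exact hg.1.2.2 i.succ
    have h2 : g i.succ ≤ h i.succ := by
      apply hg.2 i (h i.succ)
      · rw [← ih]; exact hh.1.1 (Fin.castSucc_lt_succ (i := i))
      · exact hh.1.2.2 i.succ
    omega

theorem stmt16 (E : ℕ → A) (n : ℕ) (hn : 0 < n) {N : ℕ} (α : Fin (N+1) → A)
    (t : ℕ → ℕ) (ht : StrictMono t) (k : ℕ) (hk : t (n-1) - t 0 < k) :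
    {s : ℕ | ∃ h, IsOcc E n α h ∧ t (h 0) = s ∧
        t (h (Fin.last N)) ≤ s + k}.ncard = {h | IsET E n α h}.ncard ∧
    {h | IsET E n α h}.ncard =
      {i : ℕ | ∃ h, IsOcc E n α h ∧ h 0 = i}.ncard := by
  set S : Set ℕ := {i : ℕ | ∃ h, IsOcc E n α h ∧ h 0 = i} with hS
  -- every occurrence satisfies the window bound automatically
  have hbound : ∀ h : Fin (N+1) → ℕ, IsOcc E n α h →
      t (h (Fin.last N)) ≤ t (h 0) + k := by
    intro h hocc
    have h1 : h (Fin.last N) ≤ n - 1 :=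
      Nat.le_sub_one_of_lt (hocc.2.1 (Fin.last N))
    have h2 : t (h (Fin.last N)) ≤ t (n-1) := ht.monotone h1
    have h3 : t 0 ≤ t (n-1) := ht.monotone (Nat.zero_le _)
    have h4 : t 0 ≤ t (h 0) := ht.monotone (Nat.zero_le _)
    omega
  have hset1 : {s : ℕ | ∃ h, IsOcc E n α h ∧ t (h 0) = s ∧
      t (h (Fin.last N)) ≤ s + k} = t '' S := by
    ext s
    constructor
    · rintro ⟨h, hocc, rfl, -⟩
      exact ⟨h 0, ⟨h, hocc, rfl⟩, rfl⟩
    · rintro ⟨i, ⟨h, hocc, rfl⟩, rfl⟩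
      exact ⟨h, hocc, rfl, hbound h hocc⟩
  have hset2 : (fun h : Fin (N+1) → ℕ => h 0) '' {h | IsET E n α h} = S := by
    ext i
    constructor
    · rintro ⟨h, hET, rfl⟩
      exact ⟨h, hET.1, rfl⟩
    · rintro ⟨h, hocc, rfl⟩
      obtain ⟨g, hgET, hg0⟩ := exists_ET hocc
      exact ⟨g, hgET, hg0⟩
  have hinj : Set.InjOn (fun h : Fin (N+1) → ℕ => h 0) {h | IsET E n α h} := by
    intro h1 hh1 h2 hh2 heq
    exact ET_unique hh1 hh2 heq
  have hcard2 : {h | IsET E n α h}.ncard = S.ncard := by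
    rw [← hset2]
    exact (Set.ncard_image_of_injOn hinj).symm
  have hcard1 : {s : ℕ | ∃ h, IsOcc E n α h ∧ t (h 0) = s ∧
      t (h (Fin.last N)) ≤ s + k}.ncard = S.ncard := by
    rw [hset1]
    exact Set.ncard_image_of_injective S ht.injective
  exact ⟨hcard1.trans hcard2.symm, hcard2⟩
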